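/- Let ℰ be a coarse structure, A a unital ℰ-filtered C*-algebra, 0 < ε < 1/12, and E ∈ ℰ. Let u and v be ε-E-unitaries in A. Then there is a continuous path (w_t)_{t∈[0,1]} in M₂(A) with w₀ = diag(u, v) and w₁ = diag(uv, 1), such that for every t ∈ [0,1], all entries of w_t lie in A_{E+E} and ‖w_t* w_t − 1‖ < 3ε and ‖w_t w_t* − 1‖ < 3ε; that is, diag(u, v) and diag(uv, 1) are homotopic as 3ε-2E-unitaries in M₂(A). -/

import Mathlib

/-- The (unique) C*-norm of a square matrix over a C*-algebra `A`: the operator norm of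
the matrix acting on the Hilbert `A`-module `Aⁿ`. -/
noncomputable def matCNorm {A : Type*} [CStarAlgebra A] {n : ℕ}
    (x : Matrix (Fin n) (Fin n) A) : ℝ :=
  sSup {t : ℝ | ∃ v : Fin n → A, ‖∑ j, star (v j) * v j‖ ≤ 1 ∧
    t = Real.sqrt ‖∑ j, star (x.mulVec v j) * x.mulVec v j‖}

/-- An `ℰ`-filtered (unital) C*-algebra structure on `A`: a family of closed linear
subspaces `F E`, monotone in `E`, stable under the involution, satisfying
`F E * F E' ⊆ F (E + E')`, with dense union, and with `1 ∈ F E` for all `E`. -/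
structure CoarseFiltration (ℰ : Type*) [AddCommSemigroup ℰ] [Lattice ℰ]
    (A : Type*) [CStarAlgebra A] where
  F : ℰ → Submodule ℂ A
  closed : ∀ E, IsClosed (F E : Set A)
  mono : ∀ ⦃E E' : ℰ⦄, E ≤ E' → F E ≤ F E'
  star_mem : ∀ E : ℰ, ∀ a ∈ F E, star a ∈ F E
  mul_mem : ∀ E E' : ℰ, ∀ a b : A, a ∈ F E → b ∈ F E' → a * b ∈ F (E + E')
  dense_union : Dense (⋃ E : ℰ, (F E : Set A))
  one_mem : ∀ E : ℰ, (1 : A) ∈ F E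


open scoped WithCStarModule InnerProductSpace

noncomputable section Aux

attribute [local instance] CStarAlgebra.spectralOrder CStarAlgebra.spectralOrderedRing

variable {A : Type*} [CStarAlgebra A]

noncomputable def vecNorm (x : Fin 2 → A) : ℝ :=
  Real.sqrt ‖∑ j, star (x j) * x j‖

lemma vecNorm_eq (x : Fin 2 → A) :
    vecNorm x = ‖(WithCStarModule.equiv A (Fin 2 → A)).symm (fun j => star (x j))‖ := by
  rw [WithCStarModule.pi_norm]
  simp [vecNorm, WithCStarModule.equiv_symm_pi_apply, WithCStarModule.inner_def]

lemma vecNorm_nonneg (x : Fin 2 → A) : 0 ≤ vecNorm x := Real.sqrt_nonneg _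

lemma vecNorm_add_le (x y : Fin 2 → A) :
    vecNorm (x + y) ≤ vecNorm x + vecNorm y := by
  have hxy : (fun j => star ((x + y) j)) = (fun j => star (x j)) + (fun j => star (y j)) := by
    funext j; simp [star_add]
  rw [vecNorm_eq, vecNorm_eq, vecNorm_eq, hxy, WithCStarModule.equiv_symm_add]
  exact norm_add_le _ _


lemma cstar_norm_one_le : ‖(1 : A)‖ ≤ 1 := by
  rcases subsingleton_or_nontrivial A with h | h
  · simp [Subsingleton.elim (1 : A) 0]
  · exact le_of_eq norm_one

lemma algMap_real_nonneg {d : ℝ} (hd : 0 ≤ d) : (0 : A) ≤ algebraMap ℝ A d := by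
  have h : algebraMap ℝ A d =
      star (algebraMap ℂ A (Real.sqrt d : ℂ)) * algebraMap ℂ A (Real.sqrt d : ℂ) := by
    rw [← algebraMap_star_comm, ← map_mul]
    have : (star (Real.sqrt d : ℂ)) * (Real.sqrt d : ℂ) = ((d : ℝ) : ℂ) := by
      rw [RCLike.star_def, Complex.conj_ofReal, ← Complex.ofReal_mul,
        Real.mul_self_sqrt hd]
    rw [this, IsScalarTower.algebraMap_apply ℝ ℂ A]
    rfl
  rw [h]
  exact star_mul_self_nonneg _

/-- Operator-norm bound for a matrix acting on `A²`. -/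
def opLe (x : Matrix (Fin 2) (Fin 2) A) (C : ℝ) : Prop :=
  0 ≤ C ∧ ∀ v : Fin 2 → A, vecNorm (x.mulVec v) ≤ C * vecNorm v

lemma opLe.mul {x y : Matrix (Fin 2) (Fin 2) A} {C D : ℝ}
    (hx : opLe x C) (hy : opLe y D) : opLe (x * y) (C * D) := by
  refine ⟨mul_nonneg hx.1 hy.1, fun v => ?_⟩
  rw [← Matrix.mulVec_mulVec]
  calc vecNorm (x.mulVec (y.mulVec v)) ≤ C * vecNorm (y.mulVec v) := hx.2 _
    _ ≤ C * (D * vecNorm v) := by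
        exact mul_le_mul_of_nonneg_left (hy.2 v) hx.1
    _ = C * D * vecNorm v := by ring

lemma opLe.add {x y : Matrix (Fin 2) (Fin 2) A} {C D : ℝ}
    (hx : opLe x C) (hy : opLe y D) : opLe (x + y) (C + D) := by
  refine ⟨add_nonneg hx.1 hy.1, fun v => ?_⟩
  rw [Matrix.add_mulVec]
  calc vecNorm (x.mulVec v + y.mulVec v) ≤ vecNorm (x.mulVec v) + vecNorm (y.mulVec v) :=
        vecNorm_add_le _ _
    _ ≤ C * vecNorm v + D * vecNorm v := add_le_add (hx.2 v) (hy.2 v)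
    _ = (C + D) * vecNorm v := by ring

lemma mulVec_fin_two (a b c d : A) (x : Fin 2 → A) :
    (!![a, b; c, d]).mulVec x = ![a * x 0 + b * x 1, c * x 0 + d * x 1] := by
  funext i
  fin_cases i <;>
    simp [Matrix.mulVec, dotProduct, Fin.sum_univ_two]

lemma opLe_diag {a b : A} {C : ℝ} (hC : 0 ≤ C) (ha : ‖a‖ ≤ C) (hb : ‖b‖ ≤ C) :
    opLe !![a, 0; 0, (b : A)] C := by
  refine ⟨hC, fun x => ?_⟩
  rw [mulVec_fin_two]
  have key : ∀ (e : A) (z : A), ‖e‖ ≤ C →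
      star (e * z) * (e * z) ≤ algebraMap ℝ A (C ^ 2) * (star z * z) := by
    intro e z he
    have h1 : star e * e ≤ algebraMap ℝ A (C ^ 2) := by
      refine le_trans CStarAlgebra.star_mul_le_algebraMap_norm_sq ?_
      rw [← sub_nonneg, ← map_sub]
      exact algMap_real_nonneg (by nlinarith [norm_nonneg e])
    have h2 := star_left_conjugate_le_conjugate h1 z
    calc star (e * z) * (e * z) = star z * (star e * e) * z := by
          rw [star_mul]; noncomm_ring
      _ ≤ star z * algebraMap ℝ A (C ^ 2) * z := h2
      _ = algebraMap ℝ A (C ^ 2) * (star z * z) := by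
          rw [← Algebra.commutes (C ^ 2) (star z)]; noncomm_ring
  have hsum : ∑ j, star (![a * x 0 + 0 * x 1, 0 * x 0 + b * x 1] j) *
        (![a * x 0 + 0 * x 1, 0 * x 0 + b * x 1] j)
      ≤ algebraMap ℝ A (C ^ 2) * ∑ j, star (x j) * x j := by
    rw [Fin.sum_univ_two, Fin.sum_univ_two]
    simp only [Matrix.cons_val_zero, Matrix.cons_val_one, Matrix.head_cons, zero_mul, mul_zero,
      add_zero, zero_add, mul_add]
    exact add_le_add (key a (x 0) ha) (key b (x 1) hb)
  have hpos : (0 : A) ≤ ∑ j, star (![a * x 0 + 0 * x 1, 0 * x 0 + b * x 1] j) *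
      (![a * x 0 + 0 * x 1, 0 * x 0 + b * x 1] j) :=
    Finset.sum_nonneg fun j _ => star_mul_self_nonneg _
  have hnorm := CStarAlgebra.norm_le_norm_of_nonneg_of_le hpos hsum
  have hnorm2 : ‖algebraMap ℝ A (C ^ 2) * ∑ j, star (x j) * x j‖ ≤
      C ^ 2 * ‖∑ j, star (x j) * x j‖ := by
    calc ‖algebraMap ℝ A (C ^ 2) * ∑ j, star (x j) * x j‖ ≤
        ‖algebraMap ℝ A (C ^ 2)‖ * ‖∑ j, star (x j) * x j‖ := norm_mul_le _ _
      _ ≤ C ^ 2 * ‖∑ j, star (x j) * x j‖ := by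
          refine mul_le_mul_of_nonneg_right ?_ (norm_nonneg _)
          rw [Algebra.algebraMap_eq_smul_one, norm_smul, Real.norm_eq_abs,
            abs_of_nonneg (by positivity : (0:ℝ) ≤ C ^ 2)]
          nlinarith [cstar_norm_one_le (A := A), sq_nonneg C]
  have : vecNorm (![a * x 0 + 0 * x 1, 0 * x 0 + b * x 1]) ≤
      Real.sqrt (C ^ 2 * ‖∑ j, star (x j) * x j‖) :=
    Real.sqrt_le_sqrt (le_trans hnorm hnorm2)
  refine le_trans this ?_
  rw [Real.sqrt_mul (by positivity), Real.sqrt_sq hC]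
  exact le_refl _

/-- Rotation matrix with scalar entries. -/
noncomputable def rotM (c s : ℝ) : Matrix (Fin 2) (Fin 2) A :=
  !![(c : ℂ) • 1, -((s : ℂ) • 1); (s : ℂ) • 1, (c : ℂ) • 1]

lemma rotM_mulVec (c s : ℝ) (x : Fin 2 → A) :
    (rotM c s).mulVec x = ![(c : ℂ) • x 0 - (s : ℂ) • x 1, (s : ℂ) • x 0 + (c : ℂ) • x 1] := by
  rw [rotM, mulVec_fin_two]
  funext i
  fin_cases i <;>
    simp [smul_mul_assoc, sub_eq_add_neg]

lemma rot_key (c s : ℝ) (h : c ^ 2 + s ^ 2 = 1) (a b : A) :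
    star ((c : ℂ) • a - (s : ℂ) • b) * ((c : ℂ) • a - (s : ℂ) • b) +
      star ((s : ℂ) • a + (c : ℂ) • b) * ((s : ℂ) • a + (c : ℂ) • b) =
    star a * a + star b * b := by
  have hc : (c : ℂ) ^ 2 + (s : ℂ) ^ 2 = 1 := by exact_mod_cast congrArg (Complex.ofReal) h
  have expand : star ((c : ℂ) • a - (s : ℂ) • b) * ((c : ℂ) • a - (s : ℂ) • b) +
      star ((s : ℂ) • a + (c : ℂ) • b) * ((s : ℂ) • a + (c : ℂ) • b) =
      ((c : ℂ) ^ 2 + (s : ℂ) ^ 2) • (star a * a) + ((c : ℂ) ^ 2 + (s : ℂ) ^ 2) • (star b * b) := by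
    simp only [star_sub, star_add, star_smul, RCLike.star_def, Complex.conj_ofReal,
      sub_mul, mul_sub, add_mul, mul_add, smul_mul_smul_comm]
    module
  rw [expand, hc, one_smul, one_smul]

lemma opLe_rot (c s : ℝ) (h : c ^ 2 + s ^ 2 = 1) : opLe (rotM c s : Matrix (Fin 2) (Fin 2) A) 1 := by
  refine ⟨zero_le_one, fun x => ?_⟩
  rw [rotM_mulVec, one_mul]
  unfold vecNorm
  rw [Fin.sum_univ_two, Fin.sum_univ_two]
  simp only [Matrix.cons_val_zero, Matrix.cons_val_one, Matrix.head_cons]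
  rw [rot_key c s h]

lemma matCNorm_le_of_opLe {x : Matrix (Fin 2) (Fin 2) A} {C : ℝ} (h : opLe x C) :
    matCNorm x ≤ C := by
  refine Real.sSup_le ?_ h.1
  rintro t ⟨v, hv, rfl⟩
  have h1 : vecNorm (x.mulVec v) ≤ C * vecNorm v := h.2 v
  have h2 : vecNorm v ≤ 1 := by
    unfold vecNorm
    rw [show (1 : ℝ) = Real.sqrt 1 by simp]
    exact Real.sqrt_le_sqrt hv
  calc Real.sqrt ‖∑ j, star (x.mulVec v j) * x.mulVec v j‖ = vecNorm (x.mulVec v) := rfl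
    _ ≤ C * vecNorm v := h1
    _ ≤ C * 1 := mul_le_mul_of_nonneg_left h2 h.1
    _ = C := mul_one C

end Aux


section Main

variable {A : Type*} [CStarAlgebra A]

lemma star_rotM (c s : ℝ) : star (rotM c s : Matrix (Fin 2) (Fin 2) A) = rotM c (-s) := by
  ext i j
  fin_cases i <;> fin_cases j <;>
    simp [rotM, Matrix.conjTranspose_apply, star_smul, RCLike.star_def, Complex.conj_ofReal]

lemma rotM_mul_rotM (c s : ℝ) (h : c ^ 2 + s ^ 2 = 1) :
    (rotM c s : Matrix (Fin 2) (Fin 2) A) * rotM c (-s) = 1 := by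
  have hc : (c : ℂ) * c + (s : ℂ) * s = 1 := by
    exact_mod_cast congrArg Complex.ofReal (by nlinarith : c * c + s * s = 1)
  ext i j
  fin_cases i <;> fin_cases j <;>
    · simp [rotM, Matrix.mul_apply, Fin.sum_univ_two, Matrix.one_apply,
        smul_mul_smul_comm, smul_smul, ← add_smul, ← sub_smul]
      match_scalars <;> push_cast <;> first | ring1 | linear_combination h

end Main

section Big

variable {A : Type*} [CStarAlgebra A]

lemma star_diag_fin_two (a : A) :
    star (!![a, 0; 0, (1 : A)]) = !![star a, 0; 0, 1] := by
  ext i j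
  fin_cases i <;> fin_cases j <;> simp [Matrix.conjTranspose_apply]

lemma diag_mul_diag (a b : A) :
    (!![a, 0; 0, (1 : A)]) * (!![b, 0; 0, (1 : A)]) = 1 + !![a * b - 1, 0; 0, (0 : A)] := by
  ext i j
  fin_cases i <;> fin_cases j <;>
    · simp [Matrix.mul_apply, Fin.sum_univ_two, Matrix.one_apply]
      try abel

lemma norm_le_K {ε : ℝ} (hε0 : 0 < ε) {u : A} (hu1 : ‖star u * u - 1‖ < ε) :
    ‖u‖ ≤ Real.sqrt (1 + ε) := by
  have h1 : ‖u‖ * ‖u‖ = ‖star u * u‖ := (CStarRing.norm_star_mul_self).symm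
  have h2 : ‖star u * u‖ ≤ ε + 1 := by
    calc ‖star u * u‖ = ‖(star u * u - 1) + 1‖ := by rw [sub_add_cancel]
      _ ≤ ‖star u * u - 1‖ + ‖(1 : A)‖ := norm_add_le _ _
      _ ≤ ε + 1 := add_le_add hu1.le cstar_norm_one_le
  have h3 : Real.sqrt (1 + ε) * Real.sqrt (1 + ε) = 1 + ε :=
    Real.mul_self_sqrt (by linarith)
  nlinarith [norm_nonneg u, Real.sqrt_nonneg (1 + ε)]

set_option maxHeartbeats 1000000 in
/-- The two key norm bounds for `W = Du * (R * (Dv * R'))`. -/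
lemma key_norm_bounds {ε : ℝ} (hε0 : 0 < ε) (hε1 : ε < 1) (u v : A)
    (hu1 : ‖star u * u - 1‖ < ε) (hu2 : ‖u * star u - 1‖ < ε)
    (hv1 : ‖star v * v - 1‖ < ε) (hv2 : ‖v * star v - 1‖ < ε)
    (c s : ℝ) (h : c ^ 2 + s ^ 2 = 1) :
    matCNorm (star (!![u, 0; 0, (1:A)] * (rotM c s * (!![v, 0; 0, 1] * rotM c (-s)))) *
        (!![u, 0; 0, 1] * (rotM c s * (!![v, 0; 0, 1] * rotM c (-s)))) - 1) < 3 * ε ∧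
    matCNorm ((!![u, 0; 0, (1:A)] * (rotM c s * (!![v, 0; 0, 1] * rotM c (-s)))) *
        star (!![u, 0; 0, 1] * (rotM c s * (!![v, 0; 0, 1] * rotM c (-s)))) - 1) < 3 * ε := by
  set R : Matrix (Fin 2) (Fin 2) A := rotM c s with hR_def
  set R' : Matrix (Fin 2) (Fin 2) A := rotM c (-s) with hR'_def
  set Du : Matrix (Fin 2) (Fin 2) A := !![u, 0; 0, 1] with hDu_def
  set Dv : Matrix (Fin 2) (Fin 2) A := !![v, 0; 0, 1] with hDv_def
  set Dsu : Matrix (Fin 2) (Fin 2) A := !![star u, 0; 0, 1] with hDsu_def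
  set Dsv : Matrix (Fin 2) (Fin 2) A := !![star v, 0; 0, 1] with hDsv_def
  set Md : Matrix (Fin 2) (Fin 2) A := !![star u * u - 1, 0; 0, 0] with hMd_def
  set Nd : Matrix (Fin 2) (Fin 2) A := !![star v * v - 1, 0; 0, 0] with hNd_def
  set Md2 : Matrix (Fin 2) (Fin 2) A := !![u * star u - 1, 0; 0, 0] with hMd2_def
  set Nd2 : Matrix (Fin 2) (Fin 2) A := !![v * star v - 1, 0; 0, 0] with hNd2_def
  have hRR' : R * R' = 1 := rotM_mul_rotM c s h
  have hR'R : R' * R = 1 := by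
    have := rotM_mul_rotM (A := A) c (-s) (by nlinarith)
    rwa [neg_neg] at this
  have hstarR : star R = R' := star_rotM c s
  have hstarR' : star R' = R := by
    rw [hR'_def, star_rotM, neg_neg]
  have hstarDu : star Du = Dsu := star_diag_fin_two u
  have hstarDv : star Dv = Dsv := star_diag_fin_two v
  have hstarDsu : star Dsu = Du := by
    rw [hDsu_def, star_diag_fin_two, star_star]
  have hDsuDu : Dsu * Du = 1 + Md := diag_mul_diag (star u) u
  have hDsvDv : Dsv * Dv = 1 + Nd := diag_mul_diag (star v) v
  have hDuDsu : Du * Dsu = 1 + Md2 := diag_mul_diag u (star u)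
  have hDvDsv : Dv * Dsv = 1 + Nd2 := diag_mul_diag v (star v)
  set W : Matrix (Fin 2) (Fin 2) A := Du * (R * (Dv * R')) with hW_def
  have hsw : star W = (R * (Dsv * R')) * Dsu := by
    rw [hW_def, star_mul, star_mul, star_mul, hstarR, hstarR', hstarDu, hstarDv]
    noncomm_ring
  -- first identity
  have key1 : star W * W - 1 = (R * (Dsv * R')) * (Md * (R * (Dv * R'))) + R * (Nd * R') := by
    rw [hsw, hW_def]
    have h2 : ((R * (Dsv * R')) * Dsu) * (Du * (R * (Dv * R'))) =
        (R * (Dsv * R')) * ((Dsu * Du) * (R * (Dv * R'))) := by noncomm_ring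
    rw [h2, hDsuDu]
    have h3 : (R * (Dsv * R')) * (((1 : Matrix (Fin 2) (Fin 2) A) + Md) * (R * (Dv * R'))) =
        (R * Dsv) * ((R' * R) * (Dv * R')) + (R * (Dsv * R')) * (Md * (R * (Dv * R'))) := by
      noncomm_ring
    rw [h3, hR'R]
    have h4 : (R * Dsv) * ((1 : Matrix (Fin 2) (Fin 2) A) * (Dv * R')) =
        R * ((Dsv * Dv) * R') := by noncomm_ring
    rw [h4, hDsvDv]
    have h5 : R * (((1 : Matrix (Fin 2) (Fin 2) A) + Nd) * R') = R * R' + R * (Nd * R') := by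
      noncomm_ring
    rw [h5, hRR']
    noncomm_ring
  -- second identity
  have key2 : W * star W - 1 = Md2 + Du * ((R * (Nd2 * R')) * Dsu) := by
    rw [hsw, hW_def]
    have h2 : (Du * (R * (Dv * R'))) * ((R * (Dsv * R')) * Dsu) =
        Du * ((R * ((Dv * ((R' * R) * Dsv)) * R')) * Dsu) := by noncomm_ring
    rw [h2, hR'R]
    have h3 : Du * ((R * ((Dv * ((1 : Matrix (Fin 2) (Fin 2) A) * Dsv)) * R')) * Dsu) =
        Du * ((R * ((Dv * Dsv) * R')) * Dsu) := by noncomm_ring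
    rw [h3, hDvDsv]
    have h4 : Du * ((R * (((1 : Matrix (Fin 2) (Fin 2) A) + Nd2) * R')) * Dsu) =
        Du * ((R * R') * Dsu) + Du * ((R * (Nd2 * R')) * Dsu) := by noncomm_ring
    rw [h4, hRR']
    have h5 : Du * ((1 : Matrix (Fin 2) (Fin 2) A) * Dsu) = Du * Dsu := by noncomm_ring
    rw [h5, hDuDsu]
    noncomm_ring
  -- operator norm bounds for the pieces
  set K : ℝ := Real.sqrt (1 + ε) with hK_def
  have hK0 : 0 ≤ K := Real.sqrt_nonneg _
  have hKK : K * K = 1 + ε := Real.mul_self_sqrt (by linarith)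
  have hK1 : (1 : ℝ) ≤ K := by nlinarith
  have hnorm1 : ‖(1 : A)‖ ≤ K := le_trans cstar_norm_one_le hK1
  have hOpDu : opLe Du K := opLe_diag hK0 (norm_le_K hε0 hu1) hnorm1
  have hOpDv : opLe Dv K := opLe_diag hK0 (norm_le_K hε0 hv1) hnorm1
  have hOpDsu : opLe Dsu K := opLe_diag hK0 (by rw [norm_star]; exact norm_le_K hε0 hu1) hnorm1
  have hOpDsv : opLe Dsv K := opLe_diag hK0 (by rw [norm_star]; exact norm_le_K hε0 hv1) hnorm1
  have hOpR : opLe R 1 := opLe_rot c s h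
  have hOpR' : opLe R' 1 := opLe_rot c (-s) (by nlinarith)
  have hOpMd : opLe Md ‖star u * u - 1‖ :=
    opLe_diag (norm_nonneg _) le_rfl (by simp)
  have hOpNd : opLe Nd ‖star v * v - 1‖ :=
    opLe_diag (norm_nonneg _) le_rfl (by simp)
  have hOpMd2 : opLe Md2 ‖u * star u - 1‖ :=
    opLe_diag (norm_nonneg _) le_rfl (by simp)
  have hOpNd2 : opLe Nd2 ‖v * star v - 1‖ :=
    opLe_diag (norm_nonneg _) le_rfl (by simp)
  constructor
  · -- first bound
    have hOp : opLe (star W * W - 1)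
        ((1 * (K * 1)) * (‖star u * u - 1‖ * (1 * (K * 1))) + 1 * (‖star v * v - 1‖ * 1)) := by
      rw [key1]
      exact ((hOpR.mul (hOpDsv.mul hOpR')).mul (hOpMd.mul (hOpR.mul (hOpDv.mul hOpR')))).add
        (hOpR.mul (hOpNd.mul hOpR'))
    have hle := matCNorm_le_of_opLe hOp
    have heq : (1 * (K * 1)) * (‖star u * u - 1‖ * (1 * (K * 1))) + 1 * (‖star v * v - 1‖ * 1)
        = (K * K) * ‖star u * u - 1‖ + ‖star v * v - 1‖ := by ring
    rw [heq, hKK] at hle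
    have h0u : (0 : ℝ) ≤ ‖star u * u - 1‖ := norm_nonneg _
    nlinarith
  · -- second bound
    have hOp : opLe (W * star W - 1)
        (‖u * star u - 1‖ + K * ((1 * (‖v * star v - 1‖ * 1)) * K)) := by
      rw [key2]
      exact hOpMd2.add (hOpDu.mul ((hOpR.mul (hOpNd2.mul hOpR')).mul hOpDsu))
    have hle := matCNorm_le_of_opLe hOp
    have heq : ‖u * star u - 1‖ + K * ((1 * (‖v * star v - 1‖ * 1)) * K)
        = ‖u * star u - 1‖ + (K * K) * ‖v * star v - 1‖ := by ring
    rw [heq, hKK] at hle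
    have h0v : (0 : ℝ) ≤ ‖v * star v - 1‖ := norm_nonneg _
    nlinarith

end Big





section Assembly

variable {A : Type*} [CStarAlgebra A]

lemma B_mem {ℰ : Type*} [AddCommSemigroup ℰ] [Lattice ℰ]
    (Φ : CoarseFiltration ℰ A) (E : ℰ) {v : A} (hv : v ∈ Φ.F E) (c s : ℝ) (i j : Fin 2) :
    ((rotM c s * (!![v, 0; 0, (1:A)] * rotM c (-s)) : Matrix (Fin 2) (Fin 2) A)) i j ∈ Φ.F E := by
  fin_cases i <;> fin_cases j <;>
    · simp [rotM, Matrix.mul_apply, Fin.sum_univ_two, smul_mul_assoc, mul_smul_comm, smul_smul]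
      refine add_mem (Submodule.smul_mem _ _ hv) ?_
      first
        | exact Submodule.smul_mem _ _ (Φ.one_mem E)
        | exact neg_mem (Submodule.smul_mem _ _ (Φ.one_mem E))

lemma W_mem {ℰ : Type*} [AddCommSemigroup ℰ] [Lattice ℰ]
    (Φ : CoarseFiltration ℰ A) (E : ℰ) {u v : A} (hu : u ∈ Φ.F E) (hv : v ∈ Φ.F E)
    (c s : ℝ) (i j : Fin 2) :
    ((!![u, 0; 0, (1:A)] * (rotM c s * (!![v, 0; 0, (1:A)] * rotM c (-s)))
      : Matrix (Fin 2) (Fin 2) A)) i j ∈ Φ.F (E + E) := by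
  rw [Matrix.mul_apply, Fin.sum_univ_two]
  have hDu : ∀ k : Fin 2, (!![u, 0; 0, (1:A)]) i k ∈ Φ.F E := by
    intro k
    fin_cases i <;> fin_cases k <;>
      simp only [Matrix.cons_val_zero, Matrix.cons_val_one, Matrix.head_cons, Matrix.head_fin_const,
        Matrix.cons_val_fin_one] <;>
      first
        | exact hu
        | exact Φ.one_mem E
        | exact zero_mem _
  exact add_mem (Φ.mul_mem E E _ _ (hDu 0) (B_mem Φ E hv c s 0 j))
    (Φ.mul_mem E E _ _ (hDu 1) (B_mem Φ E hv c s 1 j))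

lemma W_at_zero (u v : A) :
    (!![u, 0; 0, (1:A)] * (rotM 0 1 * (!![v, 0; 0, (1:A)] * rotM 0 (-1)))
      : Matrix (Fin 2) (Fin 2) A) = !![u, 0; 0, v] := by
  ext i j
  fin_cases i <;> fin_cases j <;>
    simp [rotM, Matrix.mul_apply, Fin.sum_univ_two]

lemma W_at_one (u v : A) :
    (!![u, 0; 0, (1:A)] * (rotM 1 0 * (!![v, 0; 0, (1:A)] * rotM 1 (-0)))
      : Matrix (Fin 2) (Fin 2) A) = !![u * v, 0; 0, 1] := by
  ext i j
  fin_cases i <;> fin_cases j <;>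
    simp [rotM, Matrix.mul_apply, Fin.sum_univ_two]

lemma W_continuous (u v : A) :
    Continuous fun t : ℝ =>
      (!![u, 0; 0, (1:A)] *
        (rotM (Real.cos (Real.pi / 2 * (1 - t))) (Real.sin (Real.pi / 2 * (1 - t))) *
          (!![v, 0; 0, (1:A)] *
            rotM (Real.cos (Real.pi / 2 * (1 - t))) (-(Real.sin (Real.pi / 2 * (1 - t))))))
        : Matrix (Fin 2) (Fin 2) A) := by
  have hrot : ∀ (f g : ℝ → ℝ), Continuous f → Continuous g →
      Continuous fun t : ℝ => (rotM (f t) (g t) : Matrix (Fin 2) (Fin 2) A) := by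
    intro f g hf hg
    apply continuous_matrix
    intro i j
    fin_cases i <;> fin_cases j <;>
      · simp only [rotM]
        norm_num
        fun_prop
  have hc : Continuous fun t : ℝ => Real.cos (Real.pi / 2 * (1 - t)) := by fun_prop
  have hs : Continuous fun t : ℝ => Real.sin (Real.pi / 2 * (1 - t)) := by fun_prop
  exact Continuous.matrix_mul continuous_const
    ((hrot _ _ hc hs).matrix_mul (Continuous.matrix_mul continuous_const (hrot _ _ hc hs.neg)))

end Assembly

/-- Let `ℰ` be a coarse structure (a lattice-ordered abelian semigroup
with monotone addition), `A` a unital `ℰ`-filtered C*-algebra, `0 < ε < 1/12` and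
`E ∈ ℰ`. If `u` and `v` are `ε`-`E`-unitaries in `A`, then `diag(u, v)` and
`diag(uv, 1)` are homotopic as `3ε`-`2E`-unitaries in `M₂(A)` (matrix algebras being
equipped with their unique C*-norm `matCNorm`). -/
theorem stmt_7 {ℰ : Type*} [AddCommSemigroup ℰ] [Lattice ℰ]
    [CovariantClass ℰ ℰ (· + ·) (· ≤ ·)]
    [CovariantClass ℰ ℰ (Function.swap (· + ·)) (· ≤ ·)]
    {A : Type*} [CStarAlgebra A] (Φ : CoarseFiltration ℰ A)
    (ε : ℝ) (hε0 : 0 < ε) (hε : ε < 1 / 12) (E : ℰ)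
    (u v : A)
    (huF : u ∈ Φ.F E) (hu1 : ‖star u * u - 1‖ < ε) (hu2 : ‖u * star u - 1‖ < ε)
    (hvF : v ∈ Φ.F E) (hv1 : ‖star v * v - 1‖ < ε) (hv2 : ‖v * star v - 1‖ < ε) :
    ∃ w : ℝ → Matrix (Fin 2) (Fin 2) A,
      ContinuousOn w (Set.Icc 0 1) ∧
      w 0 = !![u, 0; 0, v] ∧ w 1 = !![u * v, 0; 0, 1] ∧
      ∀ t ∈ Set.Icc (0 : ℝ) 1,
        (∀ i j, w t i j ∈ Φ.F (E + E)) ∧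
        matCNorm (star (w t) * w t - 1) < 3 * ε ∧
        matCNorm (w t * star (w t) - 1) < 3 * ε := by
  refine ⟨fun t =>
    !![u, 0; 0, (1:A)] *
      (rotM (Real.cos (Real.pi / 2 * (1 - t))) (Real.sin (Real.pi / 2 * (1 - t))) *
        (!![v, 0; 0, (1:A)] *
          rotM (Real.cos (Real.pi / 2 * (1 - t))) (-(Real.sin (Real.pi / 2 * (1 - t)))))),
    (W_continuous u v).continuousOn, ?_, ?_, ?_⟩
  · show !![u, 0; 0, (1:A)] *
      (rotM (Real.cos (Real.pi / 2 * (1 - 0))) (Real.sin (Real.pi / 2 * (1 - 0))) *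
        (!![v, 0; 0, (1:A)] *
          rotM (Real.cos (Real.pi / 2 * (1 - 0))) (-(Real.sin (Real.pi / 2 * (1 - 0)))))) = _
    have h10 : Real.pi / 2 * (1 - (0:ℝ)) = Real.pi / 2 := by ring
    rw [h10, Real.cos_pi_div_two, Real.sin_pi_div_two]
    exact W_at_zero u v
  · show !![u, 0; 0, (1:A)] *
      (rotM (Real.cos (Real.pi / 2 * (1 - 1))) (Real.sin (Real.pi / 2 * (1 - 1))) *
        (!![v, 0; 0, (1:A)] *
          rotM (Real.cos (Real.pi / 2 * (1 - 1))) (-(Real.sin (Real.pi / 2 * (1 - 1)))))) = _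
    have h11 : Real.pi / 2 * (1 - (1:ℝ)) = 0 := by ring
    rw [h11, Real.cos_zero, Real.sin_zero]
    exact W_at_one u v
  · intro t _
    obtain ⟨hb1, hb2⟩ := key_norm_bounds hε0 (by linarith) u v hu1 hu2 hv1 hv2
      (Real.cos (Real.pi / 2 * (1 - t))) (Real.sin (Real.pi / 2 * (1 - t)))
      (Real.cos_sq_add_sin_sq _)
    exact ⟨fun i j => W_mem Φ E huF hvF _ _ i j, hb1, hb2⟩
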